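/- Let n > 4, let k be a divisor of n with 1 < k and 2k ≤ n, set m = n/k, and let p be a prime. Suppose g ∈ Sym(n) has order p and is quasi-semiregular in the action of Sym(n) on the set of partitions of {1,…,n} into m parts of size k. Then p is odd, k = p, m ≤ p, g is an even permutation, g fixes setwise each part of the unique partition it fixes, and either g has exactly p fixed points and m − 1 orbits of length p on {1,…,n} (cycle type 1^p p^{m−1}), or m < p and g has no fixed points and m orbits of length p on {1,…,n} (cycle type p^m). -/

import Mathlib

/-- `P` is a partition of `{1,…,n}` (here `Fin n`) into parts of size `k`:
every member of `P` has `k` elements and every point lies in exactly one member of `P`. -/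
def IsSizedPartition (n k : ℕ) (P : Finset (Finset (Fin n))) : Prop :=
  (∀ A ∈ P, A.card = k) ∧ ∀ a : Fin n, ∃! A : Finset (Fin n), A ∈ P ∧ a ∈ A

theorem Equiv.Perm.apply_inv_self {α : Type*} (σ : Equiv.Perm α) (x : α) : σ (σ⁻¹ x) = x :=
  σ.apply_symm_apply x

namespace Stmt17

open Finset Equiv Equiv.Perm



variable {n k p : ℕ} {g : Perm (Fin n)} {Q : Finset (Finset (Fin n))}



theorem part_eq {P : Finset (Finset (Fin n))} (hP : IsSizedPartition n k P)
    {A B : Finset (Fin n)} {a : Fin n} (hA : A ∈ P) (hB : B ∈ P) (haA : a ∈ A) (haB : a ∈ B) :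
    A = B := by
  obtain ⟨C, _, huniq⟩ := hP.2 a
  rw [huniq A ⟨hA, haA⟩, huniq B ⟨hB, haB⟩]

theorem image_isPartition {P} (hP : IsSizedPartition n k P) (σ : Perm (Fin n)) :
    IsSizedPartition n k (P.image fun A => A.image ⇑σ) := by
  constructor
  · rintro A hA
    obtain ⟨B, hB, rfl⟩ := Finset.mem_image.1 hA
    rw [Finset.card_image_of_injective _ σ.injective]
    exact hP.1 B hB
  · intro a
    obtain ⟨B, ⟨hB, hbB⟩, huniq⟩ := hP.2 (σ⁻¹ a)
    refine ⟨B.image σ, ⟨Finset.mem_image_of_mem _ hB, ?_⟩, ?_⟩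
    · have := Finset.mem_image_of_mem (⇑σ) hbB
      simpa using this
    · rintro C ⟨hC, haC⟩
      obtain ⟨D, hD, rfl⟩ := Finset.mem_image.1 hC
      have hd : σ⁻¹ a ∈ D := by
        obtain ⟨d, hd, hda⟩ := Finset.mem_image.1 haC
        have : σ⁻¹ a = d := by rw [← hda]; simp
        rwa [this]
      rw [huniq D ⟨hD, hd⟩]

theorem image_comp (P : Finset (Finset (Fin n))) (σ τ : Perm (Fin n)) :
    (P.image fun A => A.image ⇑σ).image (fun A => A.image ⇑τ)
      = P.image fun A => A.image ⇑(τ * σ) := by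
  rw [Finset.image_image]
  refine Finset.image_congr ?_
  intro A _
  simp only [Function.comp_apply, Finset.image_image, Perm.coe_mul]

theorem image_subset_self_eq {P : Finset (Finset (Fin n))} (σ : Perm (Fin n))
    (h : ∀ A ∈ P, A.image ⇑σ ∈ P) : P.image (fun A => A.image ⇑σ) = P := by
  apply Finset.eq_of_subset_of_card_le
  · exact Finset.image_subset_iff.2 h
  · rw [Finset.card_image_of_injective]
    exact Finset.image_injective σ.injective




theorem fimage_mul (A : Finset (Fin n)) (σ τ : Perm (Fin n)) :
    A.image ⇑(τ * σ) = (A.image ⇑σ).image ⇑τ := by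
  rw [Finset.image_image]; rfl

theorem pow_fix (hp : p.Prime) (hord : orderOf g = p) {x : Fin n} {d : ℕ}
    (hd : ¬ p ∣ d) (hx : (g ^ d) x = x) : g x = x := by
  have hcop : Nat.Coprime d p := (Nat.coprime_comm.1 ((Nat.Prime.coprime_iff_not_dvd hp).2 hd))
  obtain ⟨a, -, ha⟩ := Nat.exists_mul_mod_eq_one_of_coprime hcop hp.one_lt
  have h1 : g ^ (d * a) = g := by
    rw [← pow_mod_orderOf, hord, ha, pow_one]
  have h2 : (g ^ (d * a)) x = x := by
    rw [pow_mul]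
    exact Equiv.Perm.pow_apply_eq_self_of_apply_eq_self hx a
  rwa [h1] at h2

theorem set_pow_fix (hp : p.Prime) (hord : orderOf g = p) {A : Finset (Fin n)} {d : ℕ}
    (hd : ¬ p ∣ d) (hA : A.image ⇑(g ^ d) = A) : A.image ⇑g = A := by
  have hcop : Nat.Coprime d p := (Nat.coprime_comm.1 ((Nat.Prime.coprime_iff_not_dvd hp).2 hd))
  obtain ⟨a, -, ha⟩ := Nat.exists_mul_mod_eq_one_of_coprime hcop hp.one_lt
  have h2 : ∀ b : ℕ, A.image ⇑((g ^ d) ^ b) = A := by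
    intro b
    induction b with
    | zero => simp
    | succ c ih => rw [pow_succ', fimage_mul, ih, hA]
  have h1 : g ^ (d * a) = g := by
    rw [← pow_mod_orderOf, hord, ha, pow_one]
  have := h2 a
  rwa [← pow_mul, h1] at this

/-- the orbit of `x` under `g` (when `orderOf g = p` and `g x ≠ x`, has `p` elements) -/
def orb (g : Perm (Fin n)) (p : ℕ) (x : Fin n) : Finset (Fin n) :=
  (Finset.range p).image (fun i => (g ^ i) x)

theorem mem_orb_self (hp : 0 < p) (x : Fin n) : x ∈ orb g p x := by
  apply Finset.mem_image.2 ⟨0, by simpa using hp⟩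

theorem pow_apply_inj (hp : p.Prime) (hord : orderOf g = p) {x : Fin n} (hx : g x ≠ x)
    {i j : ℕ} (hi : i < p) (hj : j < p) (hij : (g ^ i) x = (g ^ j) x) : i = j := by
  have key : ∀ i j : ℕ, i ≤ j → j < p → (g ^ i) x = (g ^ j) x → i = j := by
    intro i j hle hj heq
    have hfix : (g ^ (j - i)) x = x := by
      apply (g ^ i).injective
      rw [← Equiv.Perm.mul_apply, ← pow_add, Nat.add_sub_cancel' hle]
      exact heq.symm
    by_contra hne
    have hpos : 0 < j - i := Nat.sub_pos_of_lt (lt_of_le_of_ne hle hne)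
    have hnd : ¬ p ∣ (j - i) := fun hdvd =>
      absurd (Nat.le_of_dvd hpos hdvd)
        (not_le.2 (lt_of_le_of_lt (Nat.sub_le _ _) hj))
    exact hx (pow_fix hp hord hnd hfix)
  rcases le_total i j with h | h
  · exact key i j h hj hij
  · exact (key j i h hi hij.symm).symm

theorem orb_card (hp : p.Prime) (hord : orderOf g = p) {x : Fin n} (hx : g x ≠ x) :
    (orb g p x).card = p := by
  rw [orb, Finset.card_image_of_injOn, Finset.card_range]
  intro i hi j hj hij
  simp only [Finset.coe_range, Set.mem_Iio] at hi hj
  exact pow_apply_inj hp hord hx hi hj hij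

theorem orb_image (hord : orderOf g = p) (x : Fin n) :
    (orb g p x).image ⇑g = orb g p x := by
  have hgp : g ^ p = 1 := by rw [← hord]; exact pow_orderOf_eq_one g
  apply Finset.eq_of_subset_of_card_le
  · intro y hy
    obtain ⟨z, hz, rfl⟩ := Finset.mem_image.1 hy
    obtain ⟨i, hi, rfl⟩ := Finset.mem_image.1 hz
    simp only [Finset.mem_range] at hi
    have : g ((g ^ i) x) = (g ^ (i + 1)) x := by
      rw [← Equiv.Perm.mul_apply, ← pow_succ']
    rw [this]
    rcases Nat.lt_or_ge (i + 1) p with h | h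
    · exact Finset.mem_image.2 ⟨i + 1, Finset.mem_range.2 h, rfl⟩
    · have : i + 1 = p := le_antisymm hi h
      rw [this, hgp]
      exact mem_orb_self (Nat.lt_of_le_of_lt (Nat.zero_le i) hi) x
  · rw [Finset.card_image_of_injective _ g.injective]




def unionEquiv (S T : Finset (Fin n)) (hD : Disjoint S T) :
    ({x // x ∈ S} ⊕ {x // x ∈ T}) ≃ {x : Fin n // x ∈ S ∪ T} where
  toFun := fun a => match a with
    | Sum.inl s => ⟨s.1, Finset.mem_union_left _ s.2⟩
    | Sum.inr t => ⟨t.1, Finset.mem_union_right _ t.2⟩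
  invFun := fun b =>
    if h : b.1 ∈ S then Sum.inl ⟨b.1, h⟩
    else Sum.inr ⟨b.1, (Finset.mem_union.1 b.2).resolve_left h⟩
  left_inv := by
    rintro (⟨s, hs⟩ | ⟨t, ht⟩)
    · simp [hs]
    · have : t ∉ S := Finset.disjoint_right.1 hD ht
      simp [this]
  right_inv := by
    rintro ⟨b, hb⟩
    by_cases h : b ∈ S <;> simp [h]

noncomputable def swapSets (S T : Finset (Fin n)) (hD : Disjoint S T)
    (e : {x // x ∈ S} ≃ {x // x ∈ T}) : Perm (Fin n) :=
  Equiv.Perm.extendDomain ((Equiv.sumComm _ _).trans (Equiv.sumCongr e.symm e))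
    (unionEquiv S T hD)

theorem swapSets_apply_left {S T : Finset (Fin n)} {hD : Disjoint S T}
    {e : {x // x ∈ S} ≃ {x // x ∈ T}} {x : Fin n} (hs : x ∈ S) :
    swapSets S T hD e x ∈ T := by
  have hx : x = ((unionEquiv S T hD) (Sum.inl ⟨x, hs⟩) : Fin n) := rfl
  rw [swapSets, hx, Equiv.Perm.extendDomain_apply_image]
  simp only [unionEquiv, Equiv.trans_apply, Equiv.sumComm_apply, Sum.swap_inl,
    Equiv.sumCongr_apply, Sum.map_inr]
  exact (e ⟨x, hs⟩).2

theorem swapSets_apply_right {S T : Finset (Fin n)} {hD : Disjoint S T}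
    {e : {x // x ∈ S} ≃ {x // x ∈ T}} {x : Fin n} (ht : x ∈ T) :
    swapSets S T hD e x ∈ S := by
  have hx : x = ((unionEquiv S T hD) (Sum.inr ⟨x, ht⟩) : Fin n) := rfl
  rw [swapSets, hx, Equiv.Perm.extendDomain_apply_image]
  simp only [unionEquiv, Equiv.trans_apply, Equiv.sumComm_apply, Sum.swap_inr,
    Equiv.sumCongr_apply, Sum.map_inl]
  exact (e.symm ⟨x, ht⟩).2

theorem swapSets_apply_of_not_mem {S T : Finset (Fin n)} {hD : Disjoint S T}
    {e : {x // x ∈ S} ≃ {x // x ∈ T}} {x : Fin n} (hx : x ∉ S ∪ T) :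
    swapSets S T hD e x = x :=
  Equiv.Perm.extendDomain_apply_not_subtype _ _ hx

theorem swapSets_inv_apply_of_not_mem {S T : Finset (Fin n)} {hD : Disjoint S T}
    {e : {x // x ∈ S} ≃ {x // x ∈ T}} {x : Fin n} (hx : x ∉ S ∪ T) :
    (swapSets S T hD e)⁻¹ x = x := by
  have h1 := swapSets_apply_of_not_mem (hD := hD) (e := e) hx
  apply (swapSets S T hD e).injective
  rw [Equiv.Perm.apply_inv_self, h1]

theorem swapSets_inv_apply_right {S T : Finset (Fin n)} {hD : Disjoint S T}
    {e : {x // x ∈ S} ≃ {x // x ∈ T}} {x : Fin n} (ht : x ∈ T) :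
    (swapSets S T hD e)⁻¹ x ∈ S := by
  set σ := swapSets S T hD e
  set y := σ⁻¹ x with hy
  by_cases hyS : y ∈ S
  · exact hyS
  by_cases hyT : y ∈ T
  · exfalso
    have : σ y ∈ S := swapSets_apply_right hyT
    have hxy : σ y = x := by rw [hy]; exact Equiv.Perm.apply_inv_self σ x
    rw [hxy] at this
    exact Finset.disjoint_right.1 hD ht this
  · exfalso
    have : σ y = y := swapSets_apply_of_not_mem (by simp [hyS, hyT])
    have hxy : σ y = x := by rw [hy]; exact Equiv.Perm.apply_inv_self σ x
    rw [hxy] at this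
    rw [← this] at hyT
    exact hyT ht

theorem swapSets_inv_apply_left {S T : Finset (Fin n)} {hD : Disjoint S T}
    {e : {x // x ∈ S} ≃ {x // x ∈ T}} {x : Fin n} (hs : x ∈ S) :
    (swapSets S T hD e)⁻¹ x ∈ T := by
  set σ := swapSets S T hD e
  set y := σ⁻¹ x with hy
  by_cases hyT : y ∈ T
  · exact hyT
  by_cases hyS : y ∈ S
  · exfalso
    have : σ y ∈ T := swapSets_apply_left hyS
    have hxy : σ y = x := Equiv.Perm.apply_inv_self σ x
    rw [hxy] at this
    exact Finset.disjoint_left.1 hD hs this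
  · exfalso
    have : σ y = y := swapSets_apply_of_not_mem (by simp [hyS, hyT])
    have hxy : σ y = x := Equiv.Perm.apply_inv_self σ x
    rw [hxy] at this
    rw [← this] at hyS
    exact hyS hs




theorem parts_disjoint {P : Finset (Finset (Fin n))} (hP : IsSizedPartition n k P)
    {A B : Finset (Fin n)} (hA : A ∈ P) (hB : B ∈ P) (hAB : A ≠ B) : Disjoint A B := by
  rw [Finset.disjoint_left]
  intro a haA haB
  exact hAB (part_eq hP hA hB haA haB)

theorem image_eq_of_maps_to {C : Finset (Fin n)} (σ : Perm (Fin n))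
    (h : ∀ w ∈ C, σ w ∈ C) : C.image ⇑σ = C :=
  Finset.eq_of_subset_of_card_le (Finset.image_subset_iff.2 h)
    (le_of_eq (Finset.card_image_of_injective _ σ.injective).symm)


theorem master2 (hQ : IsSizedPartition n k Q)
    (hfix : ∀ P : Finset (Finset (Fin n)), IsSizedPartition n k P →
      (P.image (fun A => A.image ⇑g) = P ↔ P = Q))
    (σ : Perm (Fin n)) (hparts : ∀ C ∈ Q, C.image ⇑(σ⁻¹ * g * σ) ∈ Q) :
    Q.image (fun A => A.image ⇑σ) = Q := by
  have h1 : Q.image (fun A => A.image ⇑(σ⁻¹ * g * σ)) = Q := image_subset_self_eq _ hparts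
  have key : (Q.image fun A => A.image ⇑σ).image (fun A => A.image ⇑g)
      = Q.image fun A => A.image ⇑σ := by
    rw [image_comp]
    have hgs : g * σ = σ * (σ⁻¹ * g * σ) := by group
    rw [hgs, ← image_comp, h1]
  exact (hfix _ (image_isPartition hQ σ)).1 key

theorem no_swap (hp : p.Prime) (hord : orderOf g = p)
    (hQ : IsSizedPartition n k Q)
    (hfix : ∀ P : Finset (Finset (Fin n)), IsSizedPartition n k P →
      (P.image (fun A => A.image ⇑g) = P ↔ P = Q))
    (hinv : ∀ A ∈ Q, A.image ⇑g = A)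
    {A B S T : Finset (Fin n)} (hA : A ∈ Q) (hB : B ∈ Q) (hAB : A ≠ B)
    (hSA : S ⊆ A) (hTB : T ⊆ B) (hSne : S.Nonempty) (hSA' : S ≠ A)
    (hcard : S.card = T.card) (hSg : S.image ⇑g = S) (hTg : T.image ⇑g = T) : False := by
  have hTne : T.Nonempty := by
    rw [← Finset.card_pos, ← hcard, Finset.card_pos]; exact hSne
  have hDAB : Disjoint A B := parts_disjoint hQ hA hB hAB
  have hD : Disjoint S T := hDAB.mono hSA hTB
  let e : {x // x ∈ S} ≃ {x // x ∈ T} := Finset.equivOfCardEq hcard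
  set σ := swapSets S T hD e with hσ
  -- membership facts for g on S, T
  have hgS : ∀ x, x ∈ S → g x ∈ S := by
    intro x hx; rw [← hSg]; exact Finset.mem_image_of_mem _ hx
  have hgT : ∀ x, x ∈ T → g x ∈ T := by
    intro x hx; rw [← hTg]; exact Finset.mem_image_of_mem _ hx
  have hgS' : ∀ x, x ∉ S → g x ∉ S := by
    intro x hx hgx
    rw [← hSg] at hgx
    obtain ⟨y, hy, hyx⟩ := Finset.mem_image.1 hgx
    exact hx (by rwa [← g.injective hyx])
  have hgT' : ∀ x, x ∉ T → g x ∉ T := by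
    intro x hx hgx
    rw [← hTg] at hgx
    obtain ⟨y, hy, hyx⟩ := Finset.mem_image.1 hgx
    exact hx (by rwa [← g.injective hyx])
  have hparts : ∀ C ∈ Q, C.image ⇑(σ⁻¹ * g * σ) ∈ Q := by
    intro C hC
    have : C.image ⇑(σ⁻¹ * g * σ) = C := by
      apply image_eq_of_maps_to
      intro w hw
      simp only [Equiv.Perm.mul_apply]
      by_cases hwS : w ∈ S
      · have hCA : C = A := part_eq hQ hC hA hw (hSA hwS)
        have h1 : σ w ∈ T := swapSets_apply_left hwS
        have h2 : g (σ w) ∈ T := hgT _ h1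
        have h3 : σ⁻¹ (g (σ w)) ∈ S := swapSets_inv_apply_right h2
        rw [hCA]; exact hSA h3
      by_cases hwT : w ∈ T
      · have hCB : C = B := part_eq hQ hC hB hw (hTB hwT)
        have h1 : σ w ∈ S := swapSets_apply_right hwT
        have h2 : g (σ w) ∈ S := hgS _ h1
        have h3 : σ⁻¹ (g (σ w)) ∈ T := swapSets_inv_apply_left h2
        rw [hCB]; exact hTB h3
      · have h1 : σ w = w := swapSets_apply_of_not_mem (by simp [hwS, hwT])
        rw [h1]
        have h2 : g w ∈ C := by
          rw [← hinv C hC]; exact Finset.mem_image_of_mem _ hw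
        have h3 : g w ∉ S := hgS' _ hwS
        have h4 : g w ∉ T := hgT' _ hwT
        have h5 : σ⁻¹ (g w) = g w := swapSets_inv_apply_of_not_mem (by simp [h3, h4])
        rw [h5]; exact h2
    rw [this]; exact hC
  have himg : Q.image (fun A => A.image ⇑σ) = Q := master2 hQ hfix σ hparts
  have hAσ : A.image ⇑σ ∈ Q := by
    rw [← himg]; exact Finset.mem_image_of_mem _ hA
  obtain ⟨w, hwA, hwS⟩ := Finset.exists_of_ssubset (ssubset_of_subset_of_ne hSA hSA')
  have hwT : w ∉ T := fun hwT => Finset.disjoint_left.1 hDAB hwA (hTB hwT)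
  have hwmem : w ∈ A.image ⇑σ := by
    have : σ w = w := swapSets_apply_of_not_mem (by simp [hwS, hwT])
    exact Finset.mem_image.2 ⟨w, hwA, this⟩
  have hAσA : A.image ⇑σ = A := part_eq hQ hAσ hA hwmem hwA
  obtain ⟨t, ht⟩ := hTne
  have htA : t ∈ A := by
    rw [← hAσA]
    have h1 : σ⁻¹ t ∈ S := swapSets_inv_apply_right ht
    exact Finset.mem_image.2 ⟨σ⁻¹ t, hSA h1, Equiv.Perm.apply_inv_self σ t⟩
  exact hAB (part_eq hQ hA hB htA (hTB ht))

theorem pow_mem_Q (hQg : Q.image (fun A => A.image ⇑g) = Q) :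
    ∀ (i : ℕ), ∀ A ∈ Q, A.image ⇑(g ^ i) ∈ Q := by
  intro i
  induction i with
  | zero => intro A hA; simpa using hA
  | succ c ih =>
    intro A hA
    have : A.image ⇑(g ^ (c + 1)) = (A.image ⇑(g ^ c)).image ⇑g := by
      rw [pow_succ, fimage_mul]
      rw [Finset.image_image, Finset.image_image]
      congr 1
      funext z
      simp only [Function.comp_apply, ← Equiv.Perm.mul_apply]
      rw [← pow_succ, ← pow_succ']
    rw [this]
    have := ih A hA
    rw [← hQg]
    exact Finset.mem_image_of_mem _ this

theorem sameCycle_exists_pow (hp : p.Prime) (hord : orderOf g = p) {x y : Fin n}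
    (h : g.SameCycle x y) : ∃ j : ℕ, j < p ∧ (g ^ j) x = y := by
  obtain ⟨i, hi⟩ := h
  have hp0 : (0:ℤ) < (p:ℤ) := by exact_mod_cast hp.pos
  have h1 : (0:ℤ) ≤ i % (p:ℤ) := Int.emod_nonneg i (by positivity)
  have h2 : i % (p:ℤ) < (p:ℤ) := Int.emod_lt_of_pos i hp0
  refine ⟨(i % (p:ℤ)).toNat, by omega, ?_⟩
  have key : (g ^ ((i % (p:ℤ)).toNat) : Perm (Fin n)) = g ^ i := by
    rw [← zpow_natCast, Int.toNat_of_nonneg h1, ← hord]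
    exact zpow_mod_orderOf g i
  rw [key]
  exact hi

theorem parts_invariant (hp : p.Prime) (hord : orderOf g = p) (hk1 : 1 < k)
    (hQ : IsSizedPartition n k Q)
    (hfix : ∀ P : Finset (Finset (Fin n)), IsSizedPartition n k P →
      (P.image (fun A => A.image ⇑g) = P ↔ P = Q)) :
    ∀ A ∈ Q, A.image ⇑g = A := by
  have hQg : Q.image (fun A => A.image ⇑g) = Q := (hfix Q hQ).2 rfl
  intro A hA
  by_contra hAg
  -- powers of g move A off itself
  have hApow : ∀ i : ℕ, 0 < i → i < p → Disjoint (A.image ⇑(g ^ i)) A := by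
    intro i hi0 hip
    apply parts_disjoint hQ (pow_mem_Q hQg i A hA) hA
    intro hEq
    exact hAg (set_pow_fix hp hord (fun hd => absurd (Nat.le_of_dvd hi0 hd) (not_le.2 hip)) hEq)
  obtain ⟨x, hx⟩ : A.Nonempty := by
    rw [← Finset.card_pos, hQ.1 A hA]; omega
  -- each point of A on the cycle of x equals x
  have hAC : ∀ y ∈ A, g.SameCycle x y → y = x := by
    intro y hy hsc
    obtain ⟨j, hjp, hj⟩ := sameCycle_exists_pow hp hord hsc
    rcases Nat.eq_zero_or_pos j with h0 | h0
    · rw [← hj, h0]; simp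
    · exfalso
      have : y ∈ A.image ⇑(g ^ j) := Finset.mem_image.2 ⟨x, hx, hj⟩
      exact Finset.disjoint_left.1 (hApow j h0 hjp) this hy
  set σ := (g.cycleOf x)⁻¹ with hσdef
  have hcomm : Commute (g.cycleOf x) g := by
    apply Equiv.ext
    intro y
    simp only [Equiv.Perm.mul_apply]
    by_cases h : g.SameCycle x y
    · rw [Equiv.Perm.cycleOf_apply, Equiv.Perm.cycleOf_apply, if_pos h.apply_right, if_pos h]
    · rw [Equiv.Perm.cycleOf_apply, Equiv.Perm.cycleOf_apply,
        if_neg (fun hc => h (Equiv.Perm.sameCycle_apply_right.1 hc)), if_neg h]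
  have hconj : σ⁻¹ * g * σ = g := by
    have h2 : Commute g σ := hcomm.symm.inv_right
    calc σ⁻¹ * g * σ = σ⁻¹ * (g * σ) := by rw [mul_assoc]
    _ = σ⁻¹ * (σ * g) := by rw [h2.eq]
    _ = g := by group
  have himg : Q.image (fun A => A.image ⇑σ) = Q := by
    apply master2 hQ hfix
    intro C hC
    rw [hconj]
    rw [← hQg]
    exact Finset.mem_image_of_mem _ hC
  have hAσ : A.image ⇑σ ∈ Q := by
    rw [← himg]; exact Finset.mem_image_of_mem _ hA
  obtain ⟨w, hwA, hwx⟩ := Finset.exists_mem_ne (by rw [hQ.1 A hA]; exact hk1) x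
  have hwsc : ¬ g.SameCycle x w := fun h => hwx (hAC w hwA h)
  have hσw : σ w = w := by
    rw [hσdef, Equiv.Perm.cycleOf_inv]
    exact Equiv.Perm.cycleOf_apply_of_not_sameCycle
      (fun h => hwsc (Equiv.Perm.sameCycle_inv.1 h))
  have hwmem : w ∈ A.image ⇑σ := Finset.mem_image.2 ⟨w, hwA, hσw⟩
  have hAσA : A.image ⇑σ = A := part_eq hQ hAσ hA hwmem hwA
  have hσx : σ x = g⁻¹ x := by
    rw [hσdef, Equiv.Perm.cycleOf_inv, Equiv.Perm.cycleOf_apply_self]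
  have hginvx : g⁻¹ x ∈ A := by
    rw [← hAσA]
    exact Finset.mem_image.2 ⟨x, hx, hσx⟩
  have hxA1 : x ∈ A.image ⇑g := Finset.mem_image.2 ⟨g⁻¹ x, hginvx, g.apply_inv_self x⟩
  have hne : A.image ⇑g ≠ A := hAg
  exact Finset.disjoint_left.1 (parts_disjoint hQ ((hQg ▸ Finset.mem_image_of_mem _ hA)) hA hne) hxA1 hx

theorem apply_ne_of_mem_orb (hp : p.Prime) (hord : orderOf g = p) {x y : Fin n}
    (hx : g x ≠ x) (hy : y ∈ orb g p x) : g y ≠ y := by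
  obtain ⟨i, hi, rfl⟩ := Finset.mem_image.1 hy
  intro h
  apply hx
  apply (g ^ i).injective
  have hcomm : (g ^ i) (g x) = g ((g ^ i) x) := by
    rw [← Equiv.Perm.mul_apply, ← Equiv.Perm.mul_apply, ((Commute.refl g).pow_right i).eq]
  rw [hcomm, h]

theorem orb_subset_of_invariant {A : Finset (Fin n)} (hA : A.image ⇑g = A)
    {x : Fin n} (hx : x ∈ A) : orb g p x ⊆ A := by
  have key : ∀ i : ℕ, (g ^ i) x ∈ A := by
    intro i
    induction i with
    | zero => simpa using hx
    | succ c ih =>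
      have h2 : (g ^ (c + 1)) x = g ((g ^ c) x) := by
        rw [← Equiv.Perm.mul_apply, ← pow_succ']
      rw [h2, ← hA]
      exact Finset.mem_image_of_mem _ ih
  intro y hy
  obtain ⟨i, _, rfl⟩ := Finset.mem_image.1 hy
  exact key i

theorem card_parts (hk0 : 0 < k) (hQ : IsSizedPartition n k Q) : Q.card * k = n := by
  have huniv : Finset.univ = Q.biUnion id := by
    apply Finset.eq_of_subset_of_card_le
    · intro a _
      obtain ⟨A, ⟨hA, haA⟩, _⟩ := hQ.2 a
      exact Finset.mem_biUnion.2 ⟨A, hA, haA⟩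
    · exact Finset.card_le_card (Finset.subset_univ _)
  have hc : (Q.biUnion id).card = Q.card * k := by
    rw [Finset.card_biUnion]
    · have h2 : ∀ A ∈ Q, (id A : Finset (Fin n)).card = k := fun A hA => hQ.1 A hA
      rw [Finset.sum_congr rfl h2, Finset.sum_const, smul_eq_mul]
    · intro A hA B hB hAB
      exact parts_disjoint hQ hA hB hAB
  have : (Finset.univ : Finset (Fin n)).card = n := by simp
  rw [huniv, hc] at this
  omega

theorem two_le_card_parts (hk0 : 0 < k) (hk2 : 2 * k ≤ n) (hQ : IsSizedPartition n k Q) :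
    2 ≤ Q.card := by
  have h := card_parts hk0 hQ
  nlinarith [h, hk2, hk0]

theorem purity (hp : p.Prime) (hord : orderOf g = p) (hk1 : 1 < k) (hk2 : 2 * k ≤ n)
    (hQ : IsSizedPartition n k Q)
    (hfix : ∀ P : Finset (Finset (Fin n)), IsSizedPartition n k P →
      (P.image (fun A => A.image ⇑g) = P ↔ P = Q))
    (hinv : ∀ A ∈ Q, A.image ⇑g = A) :
    ∀ A ∈ Q, (∀ a ∈ A, g a = a) ∨ (∀ a ∈ A, g a ≠ a) := by
  intro A hA
  by_contra hcon
  push_neg at hcon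
  obtain ⟨⟨y, hyA, hy⟩, x, hxA, hx⟩ := hcon
  -- x fixed, y moved, both in A
  obtain ⟨B, hB, hBA⟩ := Finset.exists_mem_ne
    (lt_of_lt_of_le one_lt_two (two_le_card_parts (by omega) hk2 hQ)) A
  obtain ⟨z, hzB⟩ : B.Nonempty := by
    rw [← Finset.card_pos, hQ.1 B hB]; omega
  have hxy : x ≠ y := fun h => hy (h ▸ hx)
  by_cases hz : g z = z
  · -- swap the two fixed points x, z
    apply no_swap hp hord hQ hfix hinv hA hB (Ne.symm hBA)
      (Finset.singleton_subset_iff.2 hxA) (Finset.singleton_subset_iff.2 hzB)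
      (Finset.singleton_nonempty x) ?_ rfl ?_ ?_
    · intro h
      rw [← h] at hyA
      exact hy (by rw [Finset.mem_singleton.1 hyA, hx])
    · rw [Finset.image_singleton, hx]
    · rw [Finset.image_singleton, hz]
  · -- swap orbit of y with orbit of z
    apply no_swap hp hord hQ hfix hinv hA hB (Ne.symm hBA)
      (orb_subset_of_invariant (hinv A hA) hyA) (orb_subset_of_invariant (hinv B hB) hzB)
      ⟨y, mem_orb_self hp.pos y⟩ ?_ ?_ (orb_image hord y) (orb_image hord z)
    · intro h
      rw [← h] at hxA
      exact apply_ne_of_mem_orb hp hord hy hxA hx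
    · rw [orb_card hp hord hy, orb_card hp hord hz]

theorem fixed_parts_eq (hp : p.Prime) (hord : orderOf g = p) (hk1 : 1 < k)
    (hQ : IsSizedPartition n k Q)
    (hfix : ∀ P : Finset (Finset (Fin n)), IsSizedPartition n k P →
      (P.image (fun A => A.image ⇑g) = P ↔ P = Q))
    (hinv : ∀ A ∈ Q, A.image ⇑g = A)
    {A B : Finset (Fin n)} (hA : A ∈ Q) (hB : B ∈ Q)
    {x z : Fin n} (hxA : x ∈ A) (hzB : z ∈ B) (hx : g x = x) (hz : g z = z) : A = B := by
  by_contra hAB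
  apply no_swap hp hord hQ hfix hinv hA hB hAB
    (Finset.singleton_subset_iff.2 hxA) (Finset.singleton_subset_iff.2 hzB)
    (Finset.singleton_nonempty x) ?_ rfl ?_ ?_
  · intro h
    have : A.card = 1 := by rw [← h]; simp
    rw [hQ.1 A hA] at this
    omega
  · rw [Finset.image_singleton, hx]
  · rw [Finset.image_singleton, hz]

theorem exists_moved_part (hp : p.Prime) (hord : orderOf g = p) (hk1 : 1 < k) (hk2 : 2 * k ≤ n)
    (hQ : IsSizedPartition n k Q)
    (hfix : ∀ P : Finset (Finset (Fin n)), IsSizedPartition n k P →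
      (P.image (fun A => A.image ⇑g) = P ↔ P = Q))
    (hinv : ∀ A ∈ Q, A.image ⇑g = A) :
    ∃ B ∈ Q, ∀ a ∈ B, g a ≠ a := by
  by_contra hcon
  push_neg at hcon
  obtain ⟨A₁, hA₁, A₂, hA₂, h12⟩ := Finset.one_lt_card.1
    (lt_of_lt_of_le one_lt_two (two_le_card_parts (by omega) hk2 hQ))
  obtain ⟨x₁, hx₁, hfx₁⟩ := hcon A₁ hA₁
  obtain ⟨x₂, hx₂, hfx₂⟩ := hcon A₂ hA₂
  have hgx₁ : g x₁ = x₁ := by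
    rcases purity hp hord hk1 hk2 hQ hfix hinv A₁ hA₁ with h | h
    · exact h x₁ hx₁
    · exact absurd hfx₁ (by simpa using h x₁ hx₁)
  have hgx₂ : g x₂ = x₂ := by
    rcases purity hp hord hk1 hk2 hQ hfix hinv A₂ hA₂ with h | h
    · exact h x₂ hx₂
    · exact absurd hfx₂ (by simpa using h x₂ hx₂)
  exact h12 (fixed_parts_eq hp hord hk1 hQ hfix hinv hA₁ hA₂ hx₁ hx₂ hgx₁ hgx₂)

theorem k_eq_p (hp : p.Prime) (hord : orderOf g = p) (hk1 : 1 < k) (hk2 : 2 * k ≤ n)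
    (hQ : IsSizedPartition n k Q)
    (hfix : ∀ P : Finset (Finset (Fin n)), IsSizedPartition n k P →
      (P.image (fun A => A.image ⇑g) = P ↔ P = Q))
    (hinv : ∀ A ∈ Q, A.image ⇑g = A) : k = p := by
  obtain ⟨B, hB, hBmoved⟩ := exists_moved_part hp hord hk1 hk2 hQ hfix hinv
  obtain ⟨z, hzB⟩ : B.Nonempty := by
    rw [← Finset.card_pos, hQ.1 B hB]; omega
  have hz : g z ≠ z := hBmoved z hzB
  have horbsub : orb g p z ⊆ B := orb_subset_of_invariant (hinv B hB) hzB
  have horbcard : (orb g p z).card = p := orb_card hp hord hz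
  have horb : orb g p z = B := by
    by_contra horb
    obtain ⟨C, hC, hCB⟩ := Finset.exists_mem_ne
      (lt_of_lt_of_le one_lt_two (two_le_card_parts (by omega) hk2 hQ)) B
    obtain ⟨w, hwC⟩ : C.Nonempty := by
      rw [← Finset.card_pos, hQ.1 C hC]; omega
    by_cases hw : g w = w
    · -- C is all fixed; take any p-subset of it
      have hCfix : ∀ a ∈ C, g a = a := by
        rcases purity hp hord hk1 hk2 hQ hfix hinv C hC with h | h
        · exact h
        · exact absurd hw (h w hwC)
      have hpk : p ≤ C.card := by
        rw [hQ.1 C hC]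
        calc p = (orb g p z).card := horbcard.symm
        _ ≤ B.card := Finset.card_le_card horbsub
        _ = k := hQ.1 B hB
      obtain ⟨T, hTC, hTcard⟩ := Finset.exists_subset_card_eq hpk
      apply no_swap hp hord hQ hfix hinv hB hC (Ne.symm hCB) horbsub hTC
        ⟨z, mem_orb_self hp.pos z⟩ horb (by rw [horbcard, hTcard])
        (orb_image hord z)
        (image_eq_of_maps_to _ (fun t ht => by rw [hCfix t (hTC ht)]; exact ht))
    · apply no_swap hp hord hQ hfix hinv hB hC (Ne.symm hCB) horbsub
        (orb_subset_of_invariant (hinv C hC) hwC)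
        ⟨z, mem_orb_self hp.pos z⟩ horb
        (by rw [horbcard, orb_card hp hord hw]) (orb_image hord z) (orb_image hord w)
  rw [← hQ.1 B hB, ← horb, horbcard]

theorem moved_part_eq_orb (hp : p.Prime) (hord : orderOf g = p) (hkp : k = p)
    (hQ : IsSizedPartition n k Q) (hinv : ∀ A ∈ Q, A.image ⇑g = A)
    {A : Finset (Fin n)} (hA : A ∈ Q) {a : Fin n} (haA : a ∈ A) (ha : g a ≠ a) :
    A = orb g p a := by
  apply (Finset.eq_of_subset_of_card_le (orb_subset_of_invariant (hinv A hA) haA) ?_).symm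
  rw [orb_card hp hord ha, hQ.1 A hA, hkp]

theorem fixed_set_eq_part (hp : p.Prime) (hord : orderOf g = p) (hk1 : 1 < k) (hk2 : 2 * k ≤ n)
    (hQ : IsSizedPartition n k Q)
    (hfix : ∀ P : Finset (Finset (Fin n)), IsSizedPartition n k P →
      (P.image (fun A => A.image ⇑g) = P ↔ P = Q))
    (hinv : ∀ A ∈ Q, A.image ⇑g = A)
    {A : Finset (Fin n)} (hA : A ∈ Q) {x : Fin n} (hxA : x ∈ A) (hx : g x = x) :
    (Finset.univ.filter fun a => g a = a) = A := by
  apply Finset.Subset.antisymm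
  · intro y hy
    have hgy : g y = y := (Finset.mem_filter.1 hy).2
    obtain ⟨B, ⟨hB, hyB⟩, _⟩ := hQ.2 y
    rw [fixed_parts_eq hp hord hk1 hQ hfix hinv hA hB hxA hyB hx hgy]
    exact hyB
  · intro y hyA
    rcases purity hp hord hk1 hk2 hQ hfix hinv A hA with h | h
    · exact Finset.mem_filter.2 ⟨Finset.mem_univ y, h y hyA⟩
    · exact absurd hx (h x hxA)

theorem moved_parts_lt_p (hp : p.Prime) (hord : orderOf g = p) (hkp : k = p)
    (hQ : IsSizedPartition n k Q)
    (hfix : ∀ P : Finset (Finset (Fin n)), IsSizedPartition n k P →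
      (P.image (fun A => A.image ⇑g) = P ↔ P = Q))
    (hinv : ∀ A ∈ Q, A.image ⇑g = A) :
    (Q.filter fun A => ∃ a ∈ A, g a ≠ a).card < p := by
  by_contra hcon
  push_neg at hcon
  haveI : NeZero p := ⟨hp.ne_zero⟩
  haveI : Fact (1 < p) := ⟨hp.one_lt⟩
  obtain ⟨s, hsM, hscard⟩ := Finset.exists_subset_card_eq hcon
  have hcards : Fintype.card (ZMod p) = Fintype.card {x // x ∈ s} := by
    rw [ZMod.card, Fintype.card_coe, hscard]
  let e : ZMod p ≃ {x // x ∈ s} := Fintype.equivOfCardEq hcards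
  let B : ZMod p → Finset (Fin n) := fun j => (e j).1
  have hBQ : ∀ j, B j ∈ Q := fun j => (Finset.mem_filter.1 (hsM (e j).2)).1
  have hBmoved : ∀ j, ∃ a ∈ B j, g a ≠ a := fun j => (Finset.mem_filter.1 (hsM (e j).2)).2
  have hBinj : Function.Injective B := fun i j hij => e.injective (Subtype.ext hij)
  choose y hyB hgy using hBmoved
  have hBorb : ∀ j, B j = orb g p (y j) := fun j =>
    moved_part_eq_orb hp hord hkp hQ hinv (hBQ j) (hyB j) (hgy j)
  set φ : ZMod p × ZMod p → Fin n := fun q => (g ^ (q.1.val)) (y q.2) with hφdef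
  have hφB : ∀ a j : ZMod p, φ (a, j) ∈ B j := by
    intro a j
    rw [hBorb j]
    exact Finset.mem_image.2 ⟨a.val, Finset.mem_range.2 (ZMod.val_lt a), rfl⟩
  have hφinj : Function.Injective φ := by
    rintro ⟨a, j⟩ ⟨b, i⟩ h
    have hji : j = i := by
      apply hBinj
      apply part_eq hQ (hBQ j) (hBQ i) (hφB a j)
      rw [show φ (a, j) = φ (b, i) from h]
      exact hφB b i
    subst hji
    have hval : a.val = b.val := by
      apply pow_apply_inj hp hord (hgy j) (ZMod.val_lt a) (ZMod.val_lt b)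
      exact h
    have hab : ((a.val : ℕ) : ZMod p) = ((b.val : ℕ) : ZMod p) := by rw [hval]
    rw [ZMod.natCast_val, ZMod.natCast_val, ZMod.cast_id, ZMod.cast_id] at hab
    rw [Prod.mk.injEq]
    exact ⟨hab, rfl⟩
  have hgφ : ∀ a j : ZMod p, g (φ (a, j)) = φ (a + 1, j) := by
    intro a j
    show g ((g ^ (a.val)) (y j)) = (g ^ ((a+1).val)) (y j)
    rw [← Equiv.Perm.mul_apply, ← pow_succ']
    have h1 : ((a + 1 : ZMod p)).val = (a.val + 1) % p := by
      rw [ZMod.val_add, ZMod.val_one]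
    have h2 : (g : Perm (Fin n)) ^ ((a.val + 1) % p) = g ^ (a.val + 1) := by
      apply pow_eq_pow_iff_modEq.2
      rw [hord]
      exact Nat.mod_modEq _ p
    rw [h1, h2]
  haveI : DecidablePred (· ∈ Set.range φ) := Classical.decPred _
  let σ' : Equiv.Perm (ZMod p × ZMod p) :=
    { toFun := fun q => (q.1 + q.2 - 1, q.1 + 1)
      invFun := fun q => (q.2 - 1, q.1 - q.2 + 2)
      left_inv := by rintro ⟨a, j⟩; simp only [Prod.mk.injEq]; constructor <;> ring
      right_inv := by rintro ⟨a, j⟩; simp only [Prod.mk.injEq]; constructor <;> ring }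
  let f : (ZMod p × ZMod p) ≃ {x : Fin n // x ∈ Set.range φ} := Equiv.ofInjective φ hφinj
  set σ : Perm (Fin n) := σ'.extendDomain f with hσdef
  have hσφ : ∀ q : ZMod p × ZMod p, σ (φ q) = φ (σ' q) := by
    intro q
    have h1 : φ q = ((f q : {x : Fin n // x ∈ Set.range φ}) : Fin n) := rfl
    rw [h1, Equiv.Perm.extendDomain_apply_image]
    rfl
  have hσnot : ∀ w : Fin n, w ∉ Set.range φ → σ w = w := fun w hw =>
    Equiv.Perm.extendDomain_apply_not_subtype _ _ hw
  have hσφ' : ∀ a j : ZMod p, σ (φ (a, j)) = φ (a + j - 1, a + 1) := fun a j => hσφ (a, j)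
  have hhφ : ∀ a j : ZMod p, (σ⁻¹ * g * σ) (φ (a, j)) = φ (a, j + 1) := by
    intro a j
    simp only [Equiv.Perm.mul_apply]
    rw [hσφ' a j, hgφ]
    apply σ.injective
    rw [Equiv.Perm.apply_inv_self, hσφ' a (j + 1)]
    have : a + j - 1 + 1 = a + (j + 1) - 1 := by ring
    rw [this]
  have hhnot : ∀ w : Fin n, w ∉ Set.range φ → (σ⁻¹ * g * σ) w = g w := by
    intro w hw
    simp only [Equiv.Perm.mul_apply]
    rw [hσnot w hw]
    have hgw : g w ∉ Set.range φ := by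
      rintro ⟨⟨a, j⟩, hq⟩
      apply hw
      refine ⟨(a - 1, j), ?_⟩
      apply g.injective
      rw [hgφ]
      have : a - 1 + 1 = a := by ring
      rw [this, hq]
    apply σ.injective
    rw [Equiv.Perm.apply_inv_self, hσnot _ hgw]
  have hparts : ∀ C ∈ Q, C.image ⇑(σ⁻¹ * g * σ) ∈ Q := by
    intro C hC
    by_cases hCB : ∃ j, C = B j
    · obtain ⟨j, rfl⟩ := hCB
      have himg : (B j).image ⇑(σ⁻¹ * g * σ) = B (j + 1) := by
        apply Finset.eq_of_subset_of_card_le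
        · apply Finset.image_subset_iff.2
          intro w hw
          have hw2 := hw
          rw [hBorb j] at hw2
          obtain ⟨i, hi, rfl⟩ := Finset.mem_image.1 hw2
          rw [Finset.mem_range] at hi
          have hwφ : (g ^ i) (y j) = φ ((i : ZMod p), j) := by
            show _ = (g ^ (((i : ZMod p)).val)) (y j)
            rw [ZMod.val_cast_of_lt hi]
          rw [hwφ, hhφ]
          exact hφB _ _
        · rw [Finset.card_image_of_injective _ (σ⁻¹ * g * σ).injective,
            hQ.1 _ (hBQ (j+1)), hQ.1 _ (hBQ j)]
      rw [himg]
      exact hBQ (j + 1)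
    · have himg : C.image ⇑(σ⁻¹ * g * σ) = C := by
        have hCg : C.image ⇑(σ⁻¹ * g * σ) = C.image ⇑g := by
          apply Finset.image_congr
          intro w hw
          apply hhnot
          rintro ⟨⟨a, j⟩, hq⟩
          apply hCB
          refine ⟨j, part_eq hQ hC (hBQ j) ?_ (hφB a j)⟩
          rw [hq]
          exact Finset.mem_coe.1 hw
        rw [hCg, hinv C hC]
      rw [himg]
      exact hC
  have himgQ := master2 hQ hfix σ hparts
  have h1 : (B 1).image ⇑σ ∈ Q := by
    rw [← himgQ]; exact Finset.mem_image_of_mem _ (hBQ 1)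
  have hy1φ : y 1 = φ (0, 1) := by
    show y 1 = (g ^ ((0 : ZMod p)).val) (y 1)
    rw [ZMod.val_zero, pow_zero]
    rfl
  have hy1 : y 1 ∈ (B 1).image ⇑σ := by
    refine Finset.mem_image.2 ⟨y 1, hyB 1, ?_⟩
    rw [hy1φ, hσφ' 0 1]
    have : (0 : ZMod p) + 1 - 1 = 0 := by ring
    rw [this]
    norm_num
  have hB1 : (B 1).image ⇑σ = B 1 := part_eq hQ h1 (hBQ 1) hy1 (hyB 1)
  have hmem : φ (1, 2) ∈ B 1 := by
    rw [← hB1]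
    refine Finset.mem_image.2 ⟨φ (1, 1), hφB 1 1, ?_⟩
    rw [hσφ' 1 1]
    have h2 : (1 : ZMod p) + 1 - 1 = 1 := by ring
    have h3 : (1 : ZMod p) + 1 = 2 := by ring
    rw [h2, h3]
  have hBB : B 1 = B 2 := part_eq hQ (hBQ 1) (hBQ 2) hmem (hφB 1 2)
  have h12 : (1 : ZMod p) = 2 := hBinj hBB
  have hval := congrArg ZMod.val h12
  rw [ZMod.val_one] at hval
  have h2v : (2 : ZMod p).val = 2 % p := by
    have hc : ((2 : ℕ) : ZMod p) = (2 : ZMod p) := by norm_cast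
    rw [← hc, ZMod.val_natCast]
  rw [h2v] at hval
  rcases Nat.lt_or_ge 2 p with h3 | h3
  · rw [Nat.mod_eq_of_lt h3] at hval
    exact absurd hval (by norm_num)
  · have hp2 : p = 2 := le_antisymm h3 hp.two_le
    rw [hp2] at hval
    norm_num at hval

end Stmt17

theorem stmt17 {n k m : ℕ} (hn : 4 < n) (hk1 : 1 < k) (hk2 : 2 * k ≤ n)
    (hkn : k ∣ n) (hm : m = n / k) {p : ℕ} (hp : p.Prime)
    (g : Equiv.Perm (Fin n)) (hord : orderOf g = p)
    (Q : Finset (Finset (Fin n))) (hQ : IsSizedPartition n k Q)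
    (hfix : ∀ P : Finset (Finset (Fin n)), IsSizedPartition n k P →
      (P.image (fun A => A.image ⇑g) = P ↔ P = Q))
    (hsemi : ∀ (j : ℤ) (P : Finset (Finset (Fin n))), IsSizedPartition n k P → P ≠ Q →
      P.image (fun A => A.image ⇑(g ^ j)) = P →
      ∀ R : Finset (Finset (Fin n)), IsSizedPartition n k R →
        R.image (fun A => A.image ⇑(g ^ j)) = R) :
    Odd p ∧ k = p ∧ m ≤ p ∧ g ∈ alternatingGroup (Fin n) ∧
    (∀ A ∈ Q, A.image ⇑g = A) ∧
    (((Finset.univ.filter fun a => g a = a).card = p ∧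
        g.cycleType = Multiset.replicate (m - 1) p) ∨
      (m < p ∧ (Finset.univ.filter fun a => g a = a).card = 0 ∧
        g.cycleType = Multiset.replicate m p)) := by
  classical
  have hk0 : 0 < k := by omega
  have hinv := Stmt17.parts_invariant hp hord hk1 hQ hfix
  have hkp : k = p := Stmt17.k_eq_p hp hord hk1 hk2 hQ hfix hinv
  have hQcard : Q.card * k = n := Stmt17.card_parts hk0 hQ
  have hmQ : Q.card = m := by
    rw [hm]
    exact (Nat.div_eq_of_eq_mul_left hk0 hQcard.symm).symm
  have hm2 : 2 ≤ m := by
    rw [← hmQ]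
    exact Stmt17.two_le_card_parts hk0 hk2 hQ
  have hclt : (Q.filter fun A => ∃ a ∈ A, g a ≠ a).card < p :=
    Stmt17.moved_parts_lt_p hp hord hkp hQ hfix hinv
  have hsupp : g.support = Finset.univ.filter (fun a => g a ≠ a) := rfl
  have hcards : (Finset.univ.filter fun a => g a = a).card + g.support.card = n := by
    rw [hsupp]
    have := Finset.card_filter_add_card_filter_not
      (s := (Finset.univ : Finset (Fin n))) (p := fun a => g a = a)
    simpa using this
  obtain ⟨t, htc⟩ := Equiv.Perm.cycleType_prime_order (by rw [hord]; exact hp)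
  rw [hord] at htc
  have hsum : g.support.card = (t + 1) * p := by
    rw [← Equiv.Perm.sum_cycleType, htc, Multiset.sum_replicate, smul_eq_mul]
  -- main case split
  by_cases hF : ∃ a : Fin n, g a = a
  · -- there are fixed points
    obtain ⟨a, ha⟩ := hF
    obtain ⟨A₀, ⟨hA₀, haA₀⟩, _⟩ := hQ.2 a
    have hFx : (Finset.univ.filter fun x => g x = x) = A₀ :=
      Stmt17.fixed_set_eq_part hp hord hk1 hk2 hQ hfix hinv hA₀ haA₀ ha
    have hfcard : (Finset.univ.filter fun x => g x = x).card = p := by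
      rw [hFx, hQ.1 A₀ hA₀, hkp]
    have hA₀fix : ∀ x ∈ A₀, g x = x := by
      intro x hx
      have : x ∈ Finset.univ.filter fun x => g x = x := by rw [hFx]; exact hx
      exact (Finset.mem_filter.1 this).2
    have hfilterneg : Q.filter (fun A => ¬ ∃ a ∈ A, g a ≠ a) = {A₀} := by
      apply Finset.Subset.antisymm
      · intro C hC
        obtain ⟨hCQ, hCfix⟩ := Finset.mem_filter.1 hC
        push_neg at hCfix
        obtain ⟨x, hx⟩ : C.Nonempty := by
          rw [← Finset.card_pos, hQ.1 C hCQ]; omega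
        have hxA₀ : x ∈ A₀ := by
          have hx2 : x ∈ Finset.univ.filter fun a => g a = a :=
            Finset.mem_filter.2 ⟨Finset.mem_univ x, hCfix x hx⟩
          rw [hFx] at hx2
          exact hx2
        rw [Finset.mem_singleton]
        exact Stmt17.part_eq hQ hCQ hA₀ hx hxA₀
      · intro C hC
        rw [Finset.mem_singleton] at hC
        subst hC
        refine Finset.mem_filter.2 ⟨hA₀, ?_⟩
        push_neg
        exact hA₀fix
    have hQsplit : (Q.filter fun A => ∃ a ∈ A, g a ≠ a).card + 1 = m := by
      have := Finset.card_filter_add_card_filter_not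
        (s := Q) (p := fun A => ∃ a ∈ A, g a ≠ a)
      rw [hfilterneg] at this
      simpa [hmQ] using this
    have hmp : m ≤ p := by omega
    have hsup2 : g.support.card = n - p := by omega
    have hnmk : n = m * p := by rw [← hmQ, ← hkp]; omega
    have ht1 : t + 1 = m - 1 := by
      have hppos := hp.pos
      have heq : (t + 1) * p = (m - 1) * p := by
        rw [← hsum, hsup2, hnmk, Nat.sub_mul, one_mul]
      exact Nat.eq_of_mul_eq_mul_right hppos heq
    have hct : g.cycleType = Multiset.replicate (m - 1) p := by rw [htc, ht1]
    have hpodd : Odd p := by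
      rw [← Nat.not_even_iff_odd]
      intro hev
      have hp2 : p = 2 := (Nat.Prime.even_iff hp).1 hev
      have : n ≤ 4 := by
        rw [hnmk, hp2]
        omega
      omega
    refine ⟨hpodd, hkp, hmp, ?_, hinv, Or.inl ⟨hfcard, hct⟩⟩
    · rw [Equiv.Perm.mem_alternatingGroup, Equiv.Perm.sign_of_cycleType, hct]
      rw [Multiset.sum_replicate, Multiset.card_replicate, smul_eq_mul]
      have : (m - 1) * p + (m - 1) = (m - 1) * (p + 1) := by ring
      rw [this]
      exact Even.neg_one_pow (Even.mul_left (Odd.add_one hpodd) _)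
  · -- no fixed points
    push_neg at hF
    have hfcard : (Finset.univ.filter fun x => g x = x).card = 0 := by
      rw [Finset.card_eq_zero, Finset.filter_eq_empty_iff]
      intro x _
      exact hF x
    have hallmoved : Q.filter (fun A => ∃ a ∈ A, g a ≠ a) = Q := by
      apply Finset.filter_true_of_mem
      intro A hA
      obtain ⟨x, hx⟩ : A.Nonempty := by
        rw [← Finset.card_pos, hQ.1 A hA]; omega
      exact ⟨x, hx, hF x⟩
    have hmp : m < p := by
      rw [hallmoved, hmQ] at hclt
      exact hclt
    have hsup2 : g.support.card = n := by omega
    have hnmk : n = m * p := by rw [← hmQ, ← hkp]; omega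
    have ht1 : t + 1 = m := by
      have hppos := hp.pos
      have : (t + 1) * p = m * p := by rw [← hsum, hsup2, hnmk]
      exact Nat.eq_of_mul_eq_mul_right hppos this
    have hct : g.cycleType = Multiset.replicate m p := by rw [htc, ht1]
    have hpodd : Odd p := by
      rw [← Nat.not_even_iff_odd]
      intro hev
      have hp2 : p = 2 := (Nat.Prime.even_iff hp).1 hev
      omega
    refine ⟨hpodd, hkp, le_of_lt hmp, ?_, hinv, Or.inr ⟨hmp, hfcard, hct⟩⟩
    · rw [Equiv.Perm.mem_alternatingGroup, Equiv.Perm.sign_of_cycleType, hct]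
      rw [Multiset.sum_replicate, Multiset.card_replicate, smul_eq_mul]
      have : m * p + m = m * (p + 1) := by ring
      rw [this]
      exact Even.neg_one_pow (Even.mul_left (Odd.add_one hpodd) _)
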